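/- Let t: Σ* ⇀ Ω* be a rational function with suffix-closed domain, and let X ⊆ dom(t) be a context-free language such that the growth of the image language t(X) is exponential. Then the t-growth of X grows exponentially and the ⟨t⟩-growth of X grows exponentially. -/

import Mathlib

/-! Common definitions for sliding-window / visibly pushdown formalizations. -/

/-- `γ` grows polynomially: `γ(n) ∈ O(n^k)` for some `k`. -/
def GrowsPolynomially (γ : ℕ → ℕ) : Prop :=
  ∃ k C : ℕ, ∀ n : ℕ, γ n ≤ C * (n + 1) ^ k

/-- `γ` grows exponentially: there is `c > 1` with `γ(n) ≥ c^n` for infinitely many `n`. -/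
def GrowsExponentially (γ : ℕ → ℕ) : Prop :=
  ∃ c : ℝ, 1 < c ∧ ∀ m : ℕ, ∃ n : ℕ, m ≤ n ∧ c ^ n ≤ (γ n : ℝ)

/-- A set of words is suffix-closed. -/
def SuffixClosed {α : Type} (X : Set (List α)) : Prop :=
  ∀ x ∈ X, ∀ s : List α, s <:+ x → s ∈ X

/-- Domain of a partial function presented with `Option`. -/
def pdom {α β : Type} (t : List α → Option β) : Set (List α) := {x | t x ≠ none}

/-- The `t`-growth of `X`: the number of values of `t` on words of `X` of length at most `n`. -/
noncomputable def growthOf {α : Type} {Y : Type} (t : List α → Y) (X : Set (List α)) (n : ℕ) : ℕ :=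
  (t '' {x | x ∈ X ∧ x.length ≤ n}).ncard

/-- Growth of a language: number of its words of length at most `n`. -/
noncomputable def langGrowth {β : Type} (L : Set (List β)) (n : ℕ) : ℕ :=
  {y | y ∈ L ∧ y.length ≤ n}.ncard

/-- Suffix expansion of a (total or partial) function: the tuple of values on all
nonempty suffixes `a₁⋯aₙ, a₂⋯aₙ, …, aₙ` of the input. -/
def cev {α : Type} {Y : Type} (t : List α → Y) (x : List α) : List Y :=
  x.tails.dropLast.map t

/-- Image of `X` under the partial function `t`. -/
def optImage {α β : Type} (t : List α → Option β) (X : Set (List α)) : Set β :=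
  {y | ∃ x ∈ X, t x = some y}

/-- A language is bounded if it is contained in `w₁* w₂* ⋯ w_k*`. -/
def BoundedLang {β : Type} (L : Set (List β)) : Prop :=
  ∃ ws : List (List β), ∀ x ∈ L, ∃ ms : List ℕ, ms.length = ws.length ∧
    x = (List.zipWith (fun (w : List β) (m : ℕ) => (List.replicate m w).flatten) ws ms).flatten

/-- `{u,v}*`: all concatenations of copies of `u` and `v`. -/
def UVStar {α : Type} (u v : List α) : Set (List α) :=
  {w | ∃ l : List (List α), (∀ p ∈ l, p = u ∨ p = v) ∧ w = l.flatten}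

/-- `{u,v}^{≤ n}`: concatenations of at most `n` words, each equal to `u` or `v`. -/
def UVPow {α : Type} (u v : List α) (n : ℕ) : Set (List α) :=
  {w | ∃ l : List (List α), (∀ p ∈ l, p = u ∨ p = v) ∧ l.length ≤ n ∧ w = l.flatten}

/-- The set `{u₂,v₂}{u,v}* Z`. -/
def FoolingSet {α : Type} (u₂ v₂ u v : List α) (Z : Set (List α)) : Set (List α) :=
  {x | ∃ a w z, (a = u₂ ∨ a = v₂) ∧ w ∈ UVStar u v ∧ z ∈ Z ∧ x = a ++ (w ++ z)}

/-- Linear fooling scheme for a partial function `t`. -/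
def IsLinearFoolingScheme {α Y : Type} (t : List α → Option Y)
    (u₂ v₂ u v : List α) (Z : Set (List α)) : Prop :=
  u₂ <:+ u ∧ v₂ <:+ v ∧ u₂.length = v₂.length ∧
  FoolingSet u₂ v₂ u v Z ⊆ pdom t ∧
  ∃ C : ℕ, ∀ n : ℕ, ∃ z ∈ Z, z.length ≤ C * (n + 1) ∧
    ∀ w ∈ UVPow u v n, t (u₂ ++ (w ++ z)) ≠ t (v₂ ++ (w ++ z))

/-- `X` contains a linear fooling set for `t`. -/
def ContainsLinearFoolingSet {α Y : Type} (t : List α → Option Y) (X : Set (List α)) : Prop :=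
  ∃ u₂ v₂ u v Z, IsLinearFoolingScheme t u₂ v₂ u v Z ∧ FoolingSet u₂ v₂ u v Z ⊆ X

/-! ### Transducers and rational functions -/

/-- A finite-state transducer over `(α, β)` with terminal output function. -/
structure Transducer (α β : Type) where
  Q : Type
  finQ : Fintype Q
  I : Set Q
  F : Set Q
  Δ : Set (Q × List α × List β × Q)
  finΔ : Δ.Finite
  o : Q → List β

namespace Transducer

variable {α β : Type}

/-- A run from `p` to `r` with input `x` and output `y`. -/
inductive Run (A : Transducer α β) : A.Q → List α → List β → A.Q → Prop
  | nil (q : A.Q) : Run A q [] [] q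
  | cons {p q r : A.Q} {x₁ x : List α} {y₁ y : List β} :
      (p, x₁, y₁, q) ∈ A.Δ → Run A q x y r → Run A p (x₁ ++ x) (y₁ ++ y) r

/-- The transduction defined by a transducer. -/
def T (A : Transducer α β) : Set (List α × List β) :=
  {p | ∃ q₀ q y, q₀ ∈ A.I ∧ q ∈ A.F ∧ A.Run q₀ p.1 y q ∧ p.2 = y ++ A.o q}

end Transducer

/-- A partial function is rational if its graph is the transduction of some transducer. -/
def IsRationalFun {α β : Type} (t : List α → Option (List β)) : Prop :=
  ∃ A : Transducer α β, ∀ x y, t x = some y ↔ (x, y) ∈ A.T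

/-! ### Right congruences, suffix expansions, critical tuples -/

/-- A right congruence: an equivalence relation compatible with appending on the right. -/
def IsRightCongruence {α : Type} (r : List α → List α → Prop) : Prop :=
  Equivalence r ∧ ∀ x y z : List α, r x y → r (x ++ z) (y ++ z)

/-- Suffix expansion of a relation: words of the same length whose corresponding
nonempty suffixes are all related. -/
def SuffixExpansion {α : Type} (r : List α → List α → Prop) (x y : List α) : Prop :=
  x.length = y.length ∧ ∀ i < x.length, r (x.drop i) (y.drop i)

/-- Number of `r`-classes of words of length at most `n`. -/
noncomputable def classCount {α : Type} (r : List α → List α → Prop) (n : ℕ) : ℕ :=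
  Set.ncard {C : Set (List α) | ∃ x : List α, x.length ≤ n ∧ C = {y | r x y}}

/-- A relation has finite index if it has finitely many classes. -/
def FiniteIndex {α : Type} (r : List α → List α → Prop) : Prop :=
  Set.Finite {C : Set (List α) | ∃ x : List α, C = {y | r x y}}

/-- Critical tuple in a right congruence. -/
def IsCriticalTuple {α : Type} (r : List α → List α → Prop) (u₂ v₂ u v : List α) : Prop :=
  1 ≤ u₂.length ∧ u₂.length = v₂.length ∧ u₂ <:+ u ∧ v₂ <:+ v ∧
  ∀ w ∈ UVStar u v, ¬ r (u₂ ++ w) (v₂ ++ w)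

/-- The Myhill–Nerode right congruence of a language. -/
def MNrel {α : Type} (L : Set (List α)) (x y : List α) : Prop :=
  ∀ z : List α, x ++ z ∈ L ↔ y ++ z ∈ L

/-! ### Suffix distance and the canonical right congruence of a rational function -/

/-- Longest common prefix. -/
def cpre {β : Type} [DecidableEq β] : List β → List β → List β
  | a :: x, b :: y => if a = b then a :: cpre x y else []
  | _, _ => []

/-- `‖x,y‖ = |x| + |y| − 2|x ∧ y|`, where `x ∧ y` is the longest common suffix. -/
def suffDist {β : Type} [DecidableEq β] (x y : List β) : ℕ :=
  x.length + y.length - 2 * (cpre x.reverse y.reverse).length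

/-- Value of a partial function (defaulting to the empty word off the domain). -/
def pval {α β : Type} (t : List α → Option (List β)) (x : List α) : List β :=
  (t x).getD []

/-- The right congruence `R_t` of Reutenauer–Schützenberger. -/
def Rt {α β : Type} [DecidableEq β] (t : List α → Option (List β)) (u v : List α) : Prop :=
  (∀ z : List α, u ++ z ∈ pdom t ↔ v ++ z ∈ pdom t) ∧
  Set.Finite {d : ℕ | ∃ w : List α, u ++ w ∈ pdom t ∧ v ++ w ∈ pdom t ∧
      d = suffDist (pval t (u ++ w)) (pval t (v ++ w))}

/-- Two partial functions are adjacent. -/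
def Adjacent {α β : Type} [DecidableEq β] (t₁ t₂ : List α → Option (List β)) : Prop :=
  Set.Finite {d : ℕ | ∃ w : List α, w ∈ pdom t₁ ∧ w ∈ pdom t₂ ∧
      d = suffDist (pval t₁ w) (pval t₂ w)}

/-! ### Visibly pushdown automata -/

/-- Kinds of letters of a pushdown alphabet. -/
inductive VPKind : Type
  | call : VPKind
  | ret : VPKind
  | intern : VPKind
deriving DecidableEq

/-- A visibly pushdown automaton over the pushdown alphabet determined by `pa`.
The bottom-of-stack symbol `⊥` is represented implicitly by the empty stack. -/
structure VPA (α : Type) (pa : α → VPKind) where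
  Q : Type
  finQ : Fintype Q
  Γ : Type
  finΓ : Fintype Γ
  q₀ : Q
  F : Set Q
  δc : Q → α → Γ × Q
  δr : Q → α → Option Γ → Q
  δi : Q → α → Q

namespace VPA

variable {α : Type} {pa : α → VPKind}

/-- One step of the VPA on a configuration (stack with top at the head, state). -/
def step (A : VPA α pa) (c : List A.Γ × A.Q) (a : α) : List A.Γ × A.Q :=
  match pa a with
  | VPKind.call => ((A.δc c.2 a).1 :: c.1, (A.δc c.2 a).2)
  | VPKind.intern => (c.1, A.δi c.2 a)
  | VPKind.ret =>
    match c.1 with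
    | [] => ([], A.δr c.2 a none)
    | γ :: st => (st, A.δr c.2 a (some γ))

/-- Extended transition function on words. -/
def run (A : VPA α pa) (c : List A.Γ × A.Q) (w : List α) : List A.Γ × A.Q :=
  w.foldl A.step c

/-- The language accepted by a VPA (from the initial configuration `⊥q₀`). -/
def acceptsLang (A : VPA α pa) : Set (List α) :=
  {w | (A.run ([], A.q₀) w).2 ∈ A.F}

/-- Language accepted from a configuration. -/
def AccLang (A : VPA α pa) (c : List A.Γ × A.Q) : Set (List α) :=
  {w | (A.run c w).2 ∈ A.F}

/-- The reachable configurations. -/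
def rConf (A : VPA α pa) : Set (List A.Γ × A.Q) :=
  Set.range (fun w => A.run ([], A.q₀) w)

end VPA

/-- A language is a visibly pushdown language over the pushdown alphabet `pa`. -/
def IsVPL {α : Type} (pa : α → VPKind) (L : Set (List α)) : Prop :=
  ∃ A : VPA α pa, L = A.acceptsLang

/-- Well-matched words over a pushdown alphabet. -/
inductive WellMatched {α : Type} (pa : α → VPKind) : List α → Prop
  | nil : WellMatched pa []
  | intern (a : α) : pa a = VPKind.intern → WellMatched pa [a]
  | append {u v : List α} : WellMatched pa u → WellMatched pa v → WellMatched pa (u ++ v)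
  | wrap {w : List α} {a b : α} : WellMatched pa w → pa a = VPKind.call → pa b = VPKind.ret →
      WellMatched pa (a :: (w ++ [b]))

/-- Descending words: concatenations of well-matched words and return letters. -/
def Descending {α : Type} (pa : α → VPKind) (w : List α) : Prop :=
  ∃ l : List (List α),
    (∀ p ∈ l, WellMatched pa p ∨ ∃ b : α, pa b = VPKind.ret ∧ p = [b]) ∧ w = l.flatten

/-- Length-lexicographic order on configurations `⊥αq` (stacks compared bottom-first). -/
def ConfLe {Q Γ : Type} (ltQ : LinearOrder Q) (ltΓ : LinearOrder Γ)
    (c d : List Γ × Q) : Prop :=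
  c.1.length < d.1.length ∨
    (c.1.length = d.1.length ∧
      (List.Lex ltΓ.lt c.1.reverse d.1.reverse ∨ (c.1 = d.1 ∧ ltQ.le c.2 d.2)))

/-- `rep` chooses from each equivalence class of reachable configurations the
length-lexicographically least representative. -/
def IsRepFun {α : Type} {pa : α → VPKind} (A : VPA α pa)
    (ltQ : LinearOrder A.Q) (ltΓ : LinearOrder A.Γ)
    (rep : List A.Γ × A.Q → List A.Γ × A.Q) : Prop :=
  ∀ c ∈ A.rConf, rep c ∈ A.rConf ∧ A.AccLang (rep c) = A.AccLang c ∧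
    ∀ c' ∈ A.rConf, A.AccLang c' = A.AccLang c → ConfLe ltQ ltΓ (rep c) c'

/-- `ν_A(w)`: the representative of the configuration reached on `w`. -/
def nuA {α : Type} {pa : α → VPKind} (A : VPA α pa)
    (rep : List A.Γ × A.Q → List A.Γ × A.Q) (w : List α) : List A.Γ × A.Q :=
  rep (A.run ([], A.q₀) w)

/-- `σ₀(w)`: the states representing the Myhill–Nerode classes of the nonempty suffixes. -/
def sigma0 {α : Type} {pa : α → VPKind} (A : VPA α pa)
    (rep : List A.Γ × A.Q → List A.Γ × A.Q) (w : List α) : List A.Q :=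
  w.tails.dropLast.map fun s => (nuA A rep s).2

/-- `φ(w)`: the state transformation of a well-matched word. -/
def phiVPA {α : Type} {pa : α → VPKind} (A : VPA α pa) (w : List α) : A.Q → A.Q :=
  fun p => (A.run ([], p) w).2

/-- `σ₁(w) = φ(w) q₂ ⋯ qₙ`, a word over the alphabet `Q^Q ∪ Q`. -/
def sigma1 {α : Type} {pa : α → VPKind} (A : VPA α pa)
    (rep : List A.Γ × A.Q → List A.Γ × A.Q) (w : List α) : List ((A.Q → A.Q) ⊕ A.Q) :=
  Sum.inl (phiVPA A w) :: ((sigma0 A rep w).tail.map Sum.inr)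

/-! ### Real-time right transducers -/

/-- A real-time right transducer (reads its input from right to left). -/
structure RightTransducer (α β : Type) where
  Q : Type
  finQ : Fintype Q
  F : Set Q
  I : Set Q
  Δ : Set (Q × α × List β × Q)
  finΔ : Δ.Finite
  o : Q → List β

namespace RightTransducer

variable {α β : Type}

/-- Input word of a sequence of transitions. -/
def inputOf {Q : Type} (ts : List (Q × α × List β × Q)) : List α :=
  ts.map fun tr => tr.2.1

/-- Output word of a sequence of transitions. -/
def outputOf {Q : Type} (ts : List (Q × α × List β × Q)) : List β :=
  (ts.map fun tr => tr.2.2.1).flatten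

/-- `IsRunFrom A q ts p`: `ts` is a run on its input from the (rightmost) state `p`
to the (leftmost) state `q`; the transitions are listed left to right. -/
def IsRunFrom (A : RightTransducer α β) : A.Q → List (A.Q × α × List β × A.Q) → A.Q → Prop
  | q, [], p => q = p
  | q, tr :: ts, p => tr ∈ A.Δ ∧ tr.1 = q ∧ IsRunFrom A tr.2.2.2 ts p

/-- There is a run on `w` from `p` (right) to `q` (left). -/
def RunOn (A : RightTransducer α β) (q : A.Q) (w : List α) (p : A.Q) : Prop :=
  ∃ ts, A.IsRunFrom q ts p ∧ inputOf ts = w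

/-- `q ⪯ p`: there is a run from `p` to `q`. -/
def Below (A : RightTransducer α β) (q p : A.Q) : Prop :=
  ∃ w, A.RunOn q w p

/-- The partial function defined by a right transducer. -/
def Defines (A : RightTransducer α β) (t : List α → Option (List β)) : Prop :=
  ∀ x y, t x = some y ↔ ∃ p q ts, p ∈ A.F ∧ q ∈ A.I ∧ A.IsRunFrom p ts q ∧
    inputOf ts = x ∧ y = A.o p ++ outputOf ts

/-- Every state occurs on some initial accepting run. -/
def Trim (A : RightTransducer α β) : Prop :=
  ∀ s : A.Q, ∃ p q ts₁ ts₂, p ∈ A.F ∧ q ∈ A.I ∧ A.IsRunFrom p ts₁ s ∧ A.IsRunFrom s ts₂ q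

/-- Every input word has at most one initial accepting run. -/
def Unambiguous (A : RightTransducer α β) : Prop :=
  ∀ p p' q q' ts ts', p ∈ A.F → p' ∈ A.F → q ∈ A.I → q' ∈ A.I →
    A.IsRunFrom p ts q → A.IsRunFrom p' ts' q' → inputOf ts = inputOf ts' →
    p = p' ∧ ts = ts'

/-- `w` is guarded by `p`: some run on `w` from `p` stays in the SCC of `p`. -/
def Guarded (A : RightTransducer α β) (p : A.Q) (w : List α) : Prop :=
  ∃ q', A.RunOn q' w p ∧ A.Below p q'

/-- The transducer is well-behaved: the terminal outputs of guarded accepting runs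
from the same state on words of equal length coincide. -/
def WellBehaved (A : RightTransducer α β) : Prop :=
  ∀ (p q q' : A.Q) ts ts', q ∈ A.F → q' ∈ A.F →
    A.IsRunFrom q ts p → A.IsRunFrom q' ts' p →
    A.Guarded p (inputOf ts) → A.Guarded p (inputOf ts') →
    (inputOf ts).length = (inputOf ts').length →
    A.o q ++ outputOf ts = A.o q' ++ outputOf ts'

end RightTransducer

/-! ### The Parikh-like map Ψ -/

/-- `Ψ(w)`: each letter of `w` paired with its position counted from the right (1-based). -/
def Psi {α : Type} (w : List α) : Set (α × ℕ) :=
  {p | ∃ i : ℕ, w[i]? = some p.1 ∧ p.2 = w.length - i}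

/-- `Ψ(L) = ⋃_{w ∈ L} Ψ(w)`. -/
def PsiL {α : Type} (L : Set (List α)) : Set (α × ℕ) :=
  ⋃ w ∈ L, Psi w

/-! ### Auxiliary development for Statement 2 -/

section Aux

open Classical

namespace S2P

variable {α β : Type}

/-- transitions as a subtype of the finite transition set -/
def TransD (A : Transducer α β) : Type := {d // d ∈ A.finΔ.toFinset}

def inw {A : Transducer α β} (δ : TransD A) : List α := δ.1.2.1
def outw {A : Transducer α β} (δ : TransD A) : List β := δ.1.2.2.1
def src {A : Transducer α β} (δ : TransD A) : A.Q := δ.1.1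
def tgt {A : Transducer α β} (δ : TransD A) : A.Q := δ.1.2.2.2

lemma TransD.mem {A : Transducer α β} (δ : TransD A) : (src δ, inw δ, outw δ, tgt δ) ∈ A.Δ := by
  have := δ.2
  rw [Set.Finite.mem_toFinset] at this
  simpa [src, inw, outw, tgt] using this

noncomputable def maxLen (A : Transducer α β) : ℕ := A.finΔ.toFinset.sup (fun d => d.2.1.length)

lemma inw_le_maxLen {A : Transducer α β} (δ : TransD A) : (inw δ).length ≤ maxLen A :=
  Finset.le_sup (f := fun d => d.2.1.length) δ.2

/-- normalized state space -/
@[reducible] def QN (A : Transducer α β) : Type := A.Q ⊕ (TransD A × Fin (maxLen A + 1))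

noncomputable instance QN.fintype (A : Transducer α β) : Fintype (QN A) := by
  letI := A.finQ
  letI : Fintype (TransD A) := FinsetCoe.fintype _
  unfold QN
  infer_instance

/-- chain state: after having consumed `j` letters of transition `δ` -/
def stt {A : Transducer α β} (δ : TransD A) (j : ℕ) : QN A :=
  if h : 0 < j ∧ j < (inw δ).length then
    Sum.inr (δ, ⟨j, lt_of_lt_of_le h.2 (le_trans (inw_le_maxLen δ) (Nat.le_succ _))⟩)
  else if j = 0 then Sum.inl (src δ) else Sum.inl (tgt δ)

/-- normalized transitions -/
def NDelta (A : Transducer α β) : Set (QN A × Option α × List β × QN A) :=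
  {d | ∃ δ : TransD A,
    (inw δ = [] ∧ d = (Sum.inl (src δ), none, outw δ, Sum.inl (tgt δ))) ∨
    (∃ j a, (inw δ)[j]? = some a ∧
      d = (stt δ j, some a, if j = 0 then outw δ else [], stt δ (j + 1)))}

inductive NRun (A : Transducer α β) : QN A → List α → List β → QN A → Prop
  | nil (q) : NRun A q [] [] q
  | eps {q q' q'' y₁ x y} : (q, none, y₁, q') ∈ NDelta A → NRun A q' x y q'' →
      NRun A q x (y₁ ++ y) q''
  | step {q q' q'' a y₁ x y} : (q, some a, y₁, q') ∈ NDelta A → NRun A q' x y q'' →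
      NRun A q (a :: x) (y₁ ++ y) q''

lemma NRun.append {A : Transducer α β} {q s r u v y y'} (h1 : NRun A q u y s)
    (h2 : NRun A s v y' r) : NRun A q (u ++ v) (y ++ y') r := by
  induction h1 with
  | nil => simpa using h2
  | eps hδ _ ih => rw [List.append_assoc]; exact NRun.eps hδ (ih h2)
  | step hδ _ ih => rw [List.append_assoc]; exact NRun.step hδ (ih h2)

/-- chain simulation of one original transition -/
lemma chain_run {A : Transducer α β} (δ : TransD A) :
    ∀ k j, j + k = (inw δ).length → 0 < j →
      NRun A (stt δ j) ((inw δ).drop j) [] (Sum.inl (tgt δ)) := by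
  intro k
  induction k with
  | zero =>
    intro j hj hj0
    have hstt : stt δ j = Sum.inl (tgt δ) := by
      unfold stt
      rw [dif_neg (by omega), if_neg (by omega)]
    rw [hstt, List.drop_eq_nil_of_le (by omega)]
    exact NRun.nil _
  | succ k ih =>
    intro j hj hj0
    have hjlt : j < (inw δ).length := by omega
    have hmem : (stt δ j, some ((inw δ).get ⟨j, hjlt⟩), (if j = 0 then outw δ else []), stt δ (j+1)) ∈ NDelta A := by
      refine ⟨δ, Or.inr ⟨j, (inw δ).get ⟨j, hjlt⟩, ?_, rfl⟩⟩
      simp [List.getElem?_eq_getElem hjlt]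
    have hdrop : (inw δ).drop j = (inw δ).get ⟨j, hjlt⟩ :: (inw δ).drop (j+1) := by
      rw [List.drop_eq_getElem_cons hjlt]; rfl
    rw [hdrop]
    have := NRun.step (A := A) hmem (ih (j+1) (by omega) (by omega))
    simpa [if_neg (by omega : ¬ j = 0)] using this

lemma run_to_nrun {A : Transducer α β} {p q x y} (h : A.Run p x y q) :
    NRun A (Sum.inl p) x y (Sum.inl q) := by
  induction h with
  | nil q => exact NRun.nil _
  | @cons p q r x₁ x y₁ y hmem _ ih =>
    have hδmem : (p, x₁, y₁, q) ∈ A.finΔ.toFinset := by rwa [Set.Finite.mem_toFinset]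
    set δ : TransD A := ⟨(p, x₁, y₁, q), hδmem⟩ with hδ
    have h1 : NRun A (Sum.inl p) x₁ y₁ (Sum.inl q) := by
      rcases Nat.eq_zero_or_pos x₁.length with h0 | hpos
      · -- epsilon transition
        have hx : x₁ = [] := List.length_eq_zero_iff.mp h0
        have hmem' : (Sum.inl (src δ), none, outw δ, Sum.inl (tgt δ)) ∈ NDelta A :=
          ⟨δ, Or.inl ⟨by simp [hδ, inw, hx], rfl⟩⟩
        have := NRun.eps (A := A) hmem' (NRun.nil (Sum.inl (tgt δ)))
        simpa [hδ, src, tgt, outw, hx] using this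
      · -- first letter then chain
        have h0lt : 0 < (inw δ).length := by simpa [hδ, inw] using hpos
        have hmem' : (stt δ 0, some ((inw δ).get ⟨0, h0lt⟩), (if 0 = 0 then outw δ else []), stt δ 1) ∈ NDelta A := by
          refine ⟨δ, Or.inr ⟨0, _, ?_, rfl⟩⟩
          simp [List.getElem?_eq_getElem h0lt]
        have hchain : NRun A (stt δ 1) ((inw δ).drop 1) [] (Sum.inl (tgt δ)) := by
          rcases Nat.lt_or_ge 1 (inw δ).length with h1lt | h1ge
          · exact chain_run δ ((inw δ).length - 1) 1 (by omega) (by omega)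
          · have hstt : stt δ 1 = Sum.inl (tgt δ) := by
              unfold stt; rw [dif_neg (by omega), if_neg (by omega)]
            rw [hstt, List.drop_eq_nil_of_le (by omega)]
            exact NRun.nil _
        have hs0 : stt δ 0 = Sum.inl (src δ) := by unfold stt; simp
        have := NRun.step (A := A) hmem' hchain
        rw [hs0] at this
        have hd : (inw δ).get ⟨0, h0lt⟩ :: (inw δ).drop 1 = inw δ := by
          have := (List.drop_eq_getElem_cons h0lt).symm
          simpa using this
        have : NRun A (Sum.inl (src δ)) (inw δ) (outw δ ++ []) (Sum.inl (tgt δ)) := by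
          rw [← hd]; simpa using this
        simpa [hδ, src, tgt, inw, outw] using this
    exact h1.append ih

end S2P

namespace S2P
variable {α β : Type}

/-- backward interpretation of normalized states -/
def bwdP (A : Transducer α β) (qf : A.Q) : QN A → List α → List β → Prop
  | Sum.inl p, x, y => A.Run p x y qf
  | Sum.inr (δ, j), x, y => ∃ x₂, x = (inw δ).drop (j : ℕ) ++ x₂ ∧ A.Run (tgt δ) x₂ y qf

lemma nrun_to_run_aux {A : Transducer α β} {s x y r} (h : NRun A s x y r) :
    ∀ qf : A.Q, r = Sum.inl qf → bwdP A qf s x y := by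
  induction h with
  | nil q =>
    rintro qf rfl
    exact Transducer.Run.nil qf
  | @eps q q' q'' y₁ x y hmem _ ih =>
    rintro qf rfl
    obtain ⟨δ, hcase⟩ := hmem
    rcases hcase with ⟨hnil, heq⟩ | ⟨j, a, hget, heq⟩
    · simp only [Prod.mk.injEq] at heq
      obtain ⟨hq, -, hy, hq'⟩ := heq
      have ihr := ih qf rfl
      rw [hq'] at ihr
      have hrun : A.Run (src δ) ([] ++ x) (outw δ ++ y) qf :=
        Transducer.Run.cons (by simpa [hnil] using δ.mem) ihr
      rw [hq, hy]
      simpa [bwdP] using hrun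
    · simp only [Prod.mk.injEq] at heq
      exact absurd heq.2.1 (by simp)
  | @step q q' q'' a y₁ x y hmem _ ih =>
    rintro qf rfl
    obtain ⟨δ, hcase⟩ := hmem
    rcases hcase with ⟨hnil, heq⟩ | ⟨j, a', hget, heq⟩
    · simp only [Prod.mk.injEq] at heq
      exact absurd heq.2.1 (by simp)
    · simp only [Prod.mk.injEq, Option.some.injEq] at heq
      obtain ⟨hq, ha, hy, hq'⟩ := heq
      have hjlt : j < (inw δ).length := by
        by_contra hge
        rw [List.getElem?_eq_none (by omega)] at hget
        exact absurd hget (by simp)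
      have haj : (inw δ)[j] = a' := by
        have := List.getElem?_eq_getElem hjlt
        rw [this] at hget
        exact (Option.some_injective _ hget)
      -- get continuation data
      have hcont : ∃ x₂, x = (inw δ).drop (j+1) ++ x₂ ∧ A.Run (tgt δ) x₂ y qf := by
        have ihr := ih qf rfl
        rw [hq'] at ihr
        unfold stt at ihr
        by_cases hlt : 0 < j + 1 ∧ j + 1 < (inw δ).length
        · rw [dif_pos hlt] at ihr
          exact ihr
        · rw [dif_neg hlt, if_neg (by omega)] at ihr
          refine ⟨x, ?_, ihr⟩
          rw [List.drop_eq_nil_of_le (by omega)]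
          simp
      obtain ⟨x₂, hx₂, hrun₂⟩ := hcont
      have hdropj : (inw δ).drop j = a' :: (inw δ).drop (j+1) := by
        rw [List.drop_eq_getElem_cons hjlt, haj]
      rw [hq]
      unfold stt
      by_cases hj0 : j = 0
      · subst hj0
        rw [dif_neg (by omega), if_pos rfl]
        have : a :: x = inw δ ++ x₂ := by
          rw [ha, hx₂, ← List.drop_zero (l := inw δ), hdropj]
          simp
        show A.Run (src δ) (a :: x) (y₁ ++ y) qf
        rw [this, hy, if_pos rfl]
        exact Transducer.Run.cons δ.mem hrun₂
      · rw [dif_pos ⟨by omega, hjlt⟩]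
        show ∃ x₃, a :: x = (inw δ).drop j ++ x₃ ∧ A.Run (tgt δ) x₃ (y₁ ++ y) qf
        refine ⟨x₂, ?_, ?_⟩
        · rw [hdropj, ha, hx₂]; simp
        · rw [hy, if_neg hj0]; simpa using hrun₂

lemma nrun_to_run {A : Transducer α β} {p qf : A.Q} {x y}
    (h : NRun A (Sum.inl p) x y (Sum.inl qf)) : A.Run p x y qf :=
  nrun_to_run_aux h qf rfl

/-- characterization of `t` via normalized runs -/
lemma t_iff_nrun {A : Transducer α β} (t : List α → Option (List β))
    (ht : ∀ x y, t x = some y ↔ (x, y) ∈ A.T) (x : List α) (y : List β) :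
    t x = some y ↔ ∃ qi qf y', qi ∈ A.I ∧ qf ∈ A.F ∧
      NRun A (Sum.inl qi) x y' (Sum.inl qf) ∧ y = y' ++ A.o qf := by
  rw [ht]
  constructor
  · rintro ⟨q₀, q, y', hI, hF, hrun, hy⟩
    exact ⟨q₀, q, y', hI, hF, run_to_nrun hrun, hy⟩
  · rintro ⟨qi, qf, y', hI, hF, hrun, hy⟩
    exact ⟨qi, qf, y', hI, hF, nrun_to_run hrun, hy⟩

/-- splitting off the first letter of a normalized run -/
lemma nrun_cons_split {A : Transducer α β} : ∀ {s x y r} {a : α}, NRun A s (a :: x) y r →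
    ∃ s' y₁ y₂, y = y₁ ++ y₂ ∧ NRun A s [a] y₁ s' ∧ NRun A s' x y₂ r := by
  intro s x y r a h
  generalize hx : a :: x = x' at h
  induction h with
  | nil => exact absurd hx (by simp)
  | @eps q q' q'' y₁ x₀ y₀ hmem _ ih =>
    obtain ⟨s', z₁, z₂, hz, h1, h2⟩ := ih hx
    exact ⟨s', y₁ ++ z₁, z₂, by rw [hz, List.append_assoc], NRun.eps hmem h1, h2⟩
  | @step q q' q'' b y₁ x₀ y₀ hmem hrest ih =>
    obtain ⟨hb, hxx⟩ : b = a ∧ x₀ = x := by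
      constructor
      · exact (List.cons.injEq .. ▸ hx.symm).1
      · exact (List.cons.injEq .. ▸ hx.symm).2
    subst hb hxx
    refine ⟨q', y₁, y₀, rfl, ?_, hrest⟩
    have := NRun.step (A := A) hmem (NRun.nil q')
    simpa using this

end S2P

namespace S2P
universe u
variable {α β : Type}

/-- The fused structure: a grammar derivation of the input word, synchronized with a
normalized transducer run. `ACb A g n q s q' x y` means: the sentential form `s` derives the
terminal word `x`, and there is a normalized run from `q` to `q'` on `x` with output `y`,
where the "derivation tree" has height at most `n`. -/
inductive ACb (A : Transducer α β) (g : ContextFreeGrammar α) :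
    ℕ → QN A → List (Symbol α g.NT) → QN A → List α → List β → Prop
  | nil {q q' y} : NRun A q [] y q' → ACb A g 0 q [] q' [] y
  | term {n q q₁ q' a s x y₁ y₂} : NRun A q [a] y₁ q₁ → ACb A g n q₁ s q' x y₂ →
      ACb A g (n + 1) q (Symbol.terminal a :: s) q' (a :: x) (y₁ ++ y₂)
  | nt {m n q q₁ q' s u x y₁ y₂} {r : ContextFreeRule α g.NT} : r ∈ g.rules →
      ACb A g m q r.output q₁ u y₁ → ACb A g n q₁ s q' x y₂ →
      ACb A g (max m n + 1) q (Symbol.nonterminal r.input :: s) q' (u ++ x) (y₁ ++ y₂)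

/-- unbounded version -/
def ACC (A : Transducer α β) (g : ContextFreeGrammar α)
    (q : QN A) (s : List (Symbol α g.NT)) (q' : QN A) (x : List α) (y : List β) : Prop :=
  ∃ n, ACb A g n q s q' x y

variable {A : Transducer α β} {g : ContextFreeGrammar α}

lemma ACC.nil {q q' y} (h : NRun A q [] y q') : ACC A g q [] q' [] y := ⟨0, ACb.nil h⟩

lemma ACC.term {q q₁ q' a s x y₁ y₂} (h : NRun A q [a] y₁ q₁) (h2 : ACC A g q₁ s q' x y₂) :
    ACC A g q (Symbol.terminal a :: s) q' (a :: x) (y₁ ++ y₂) := by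
  obtain ⟨n, hb⟩ := h2; exact ⟨n + 1, ACb.term h hb⟩

lemma ACC.nt {q q₁ q' s u x y₁ y₂} {r : ContextFreeRule α g.NT} (hr : r ∈ g.rules)
    (h1 : ACC A g q r.output q₁ u y₁) (h2 : ACC A g q₁ s q' x y₂) :
    ACC A g q (Symbol.nonterminal r.input :: s) q' (u ++ x) (y₁ ++ y₂) := by
  obtain ⟨m, hb1⟩ := h1; obtain ⟨n, hb2⟩ := h2; exact ⟨max m n + 1, ACb.nt hr hb1 hb2⟩

/-- soundness: the fused structure projects to a derivation and a run -/
lemma ACb.sound {n q s q' x y} (h : ACb A g n q s q' x y) :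
    g.Derives s (x.map Symbol.terminal) ∧ NRun A q x y q' := by
  induction h with
  | nil hr => exact ⟨ContextFreeGrammar.Derives.refl _, hr⟩
  | @term n q q₁ q' a s x y₁ y₂ hr _ ih =>
    constructor
    · have := ih.1.append_left [Symbol.terminal a]
      simpa using this
    · have := hr.append ih.2
      simpa using this
  | @nt m n q q₁ q' s u x y₁ y₂ r hrule _ _ ih1 ih2 =>
    constructor
    · have step1 : g.Derives (Symbol.nonterminal r.input :: s) (r.output ++ s) := by
        refine ContextFreeGrammar.Produces.single ⟨r, hrule, ?_⟩
        exact ContextFreeRule.Rewrites.head s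
      have step2 : g.Derives (r.output ++ s) ((u.map Symbol.terminal) ++ s) :=
        ih1.1.append_right s
      have step3 : g.Derives ((u.map Symbol.terminal) ++ s)
          ((u.map Symbol.terminal) ++ (x.map Symbol.terminal)) :=
        ih2.1.append_left _
      have := (step1.trans step2).trans step3
      simpa using this
    · exact ih1.2.append ih2.2

lemma ACC.sound {q s q' x y} (h : ACC A g q s q' x y) :
    g.Derives s (x.map Symbol.terminal) ∧ NRun A q x y q' := by
  obtain ⟨n, hb⟩ := h; exact hb.sound

/-- prepending an ε-run on the left -/
lemma ACC.preEps {q₀ q q' y₀ s x y} (h0 : NRun A q₀ [] y₀ q) (h : ACC A g q s q' x y) :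
    ACC A g q₀ s q' x (y₀ ++ y) := by
  obtain ⟨n, hb⟩ := h
  induction hb generalizing q₀ y₀ with
  | nil hr => exact ACC.nil (h0.append hr)
  | term hr hrest ih =>
    have := ACC.term (A := A) (g := g) (h0.append hr) ⟨_, hrest⟩
    simpa using this
  | nt hrule hchild hrest ih1 ih2 =>
    have hc := ih1 h0
    have := ACC.nt (A := A) (g := g) hrule hc ⟨_, hrest⟩
    simpa using this

/-- building the fused structure from pure terminals -/
lemma zipBase : ∀ (x : List α) {q q' y}, NRun A q x y q' →
    ACC A g q (x.map Symbol.terminal) q' x y := by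
  intro x
  induction x with
  | nil => intro q q' y h; exact ACC.nil h
  | cons a x ih =>
    intro q q' y h
    obtain ⟨s', y₁, y₂, hy, h1, h2⟩ := nrun_cons_split h
    rw [hy]
    exact ACC.term h1 (ih h2)

/-- splitting along a sentential concatenation -/
lemma ACC.split : ∀ (s₁ : List (Symbol α g.NT)) {s₂ q q' x y},
    ACC A g q (s₁ ++ s₂) q' x y →
    ∃ qm x₁ x₂ y₁ y₂, x = x₁ ++ x₂ ∧ y = y₁ ++ y₂ ∧
      ACC A g q s₁ qm x₁ y₁ ∧ ACC A g qm s₂ q' x₂ y₂ := by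
  intro s₁
  induction s₁ with
  | nil =>
    intro s₂ q q' x y h
    exact ⟨q, [], x, [], y, by simp, by simp, ACC.nil (NRun.nil q), h⟩
  | cons sym s₁ ih =>
    intro s₂ q q' x y h
    obtain ⟨n, hb⟩ := h
    cases hb with
    | term hr hrest =>
      obtain ⟨qm, x₁, x₂, y₁, y₂, hx, hy, hl, hrr⟩ := ih ⟨_, hrest⟩
      exact ⟨qm, _ :: x₁, x₂, _ ++ y₁, y₂, by simp [hx], by rw [hy, List.append_assoc],
        ACC.term hr hl, hrr⟩
    | nt hrule hchild hrest =>
      obtain ⟨qm, x₁, x₂, y₁, y₂, hx, hy, hl, hrr⟩ := ih ⟨_, hrest⟩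
      exact ⟨qm, _ ++ x₁, x₂, _ ++ y₁, y₂, by rw [hx, List.append_assoc],
        by rw [hy, List.append_assoc], ACC.nt hrule ⟨_, hchild⟩ hl, hrr⟩

/-- merging two fused structures -/
lemma ACC.merge : ∀ {s₁ s₂ : List (Symbol α g.NT)} {q qm q' x₁ x₂ y₁ y₂},
    ACC A g q s₁ qm x₁ y₁ → ACC A g qm s₂ q' x₂ y₂ →
    ACC A g q (s₁ ++ s₂) q' (x₁ ++ x₂) (y₁ ++ y₂) := by
  intro s₁ s₂ q qm q' x₁ x₂ y₁ y₂ h1 h2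
  obtain ⟨n, hb⟩ := h1
  revert h2
  induction hb with
  | nil hr => intro h2; simpa using ACC.preEps hr h2
  | term hr hrest ih => intro h2; simpa using ACC.term hr (ih h2)
  | nt hrule hchild hrest ih1 ih2 =>
    intro h2
    have h3 := ih2 h2
    have := ACC.nt (A := A) (g := g) hrule ⟨_, hchild⟩ h3
    simp only [List.append_assoc] at this ⊢
    exact this

end S2P

/-! ### Generic path shortening in a finite set -/

namespace S2P

section Path
variable {γ : Type*} {r : γ → γ → Prop}

inductive PathIn (r : γ → γ → Prop) : γ → γ → List γ → Prop
  | refl (a) : PathIn r a a []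
  | head {a b c l} : r a b → PathIn r b c l → PathIn r a c (a :: l)

lemma PathIn.concat {a b c l} (h : PathIn r a b l) (hbc : r b c) : PathIn r a c (l ++ [b]) := by
  induction h with
  | refl a => exact PathIn.head hbc (PathIn.refl c)
  | head hab _ ih => exact PathIn.head hab (ih hbc)

lemma pathIn_of_rtg {a b} (h : Relation.ReflTransGen r a b) : ∃ l, PathIn r a b l := by
  induction h with
  | refl => exact ⟨[], PathIn.refl a⟩
  | tail _ hbc ih => obtain ⟨l, hl⟩ := ih; exact ⟨_, hl.concat hbc⟩

lemma PathIn.split : ∀ (l₁ : List γ) {l₂ a c}, PathIn r a c (l₁ ++ l₂) →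
    ∃ m, PathIn r a m l₁ ∧ PathIn r m c l₂ := by
  intro l₁
  induction l₁ with
  | nil => intro l₂ a c h; exact ⟨a, PathIn.refl a, h⟩
  | cons d l₁ ih =>
    intro l₂ a c h
    cases h with
    | head hab hrest =>
      obtain ⟨m, h1, h2⟩ := ih hrest
      exact ⟨m, PathIn.head hab h1, h2⟩

lemma PathIn.start_eq {a b c l} (h : PathIn r a c (b :: l)) : a = b := by
  cases h; rfl

lemma PathIn.trans : ∀ {l₁ l₂ : List γ} {a m c}, PathIn r a m l₁ → PathIn r m c l₂ →
    PathIn r a c (l₁ ++ l₂) := by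
  intro l₁ l₂ a m c h1 h2
  induction h1 with
  | refl => simpa using h2
  | head hab _ ih => exact PathIn.head hab (ih h2)

lemma exists_dup : ∀ {l : List γ}, ¬ l.Nodup → ∃ (x : γ) (l₁ l₂ l₃ : List γ), l = l₁ ++ ((x :: l₂) ++ (x :: l₃)) := by
  intro l
  induction l with
  | nil => intro h; exact absurd List.nodup_nil h
  | cons a l ih =>
    intro h
    by_cases ha : a ∈ l
    · obtain ⟨s, u, hsu⟩ := List.append_of_mem ha
      exact ⟨a, [], s, u, by simp [hsu]⟩
    · have : ¬ l.Nodup := by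
        intro hn; exact h (List.nodup_cons.mpr ⟨ha, hn⟩)
      obtain ⟨x, l₁, l₂, l₃, hl⟩ := ih this
      exact ⟨x, a :: l₁, l₂, l₃, by simp [hl]⟩

lemma PathIn.dedup : ∀ (n : ℕ) {l : List γ} {a b}, l.length ≤ n → PathIn r a b l →
    ∃ l', PathIn r a b l' ∧ l'.Nodup ∧ (∀ z ∈ l', z ∈ l) := by
  intro n
  induction n with
  | zero =>
    intro l a b hlen h
    have hl : l = [] := List.length_eq_zero_iff.mp (by omega)
    subst hl
    exact ⟨[], h, List.nodup_nil, by simp⟩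
  | succ n ih =>
    intro l a b hlen h
    by_cases hnd : l.Nodup
    · exact ⟨l, h, hnd, fun z hz => hz⟩
    · obtain ⟨x, l₁, l₂, l₃, rfl⟩ := exists_dup hnd
      obtain ⟨m₁, h1, h2⟩ := PathIn.split l₁ h
      obtain ⟨m₂, h3, h4⟩ := PathIn.split (x :: l₂) h2
      
      have hm1 : m₁ = x := h3.start_eq
      have hm2 : m₂ = x := h4.start_eq
      rw [hm1] at h1
      rw [hm2] at h4
      have hshort : PathIn r a b (l₁ ++ x :: l₃) := h1.trans h4
      have hlen' : (l₁ ++ x :: l₃).length ≤ n := by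
        have := hlen
        simp only [List.length_append, List.length_cons] at this ⊢
        omega
      obtain ⟨l', hp, hnd', hsub⟩ := ih hlen' hshort
      refine ⟨l', hp, hnd', fun z hz => ?_⟩
      have := hsub z hz
      simp only [List.mem_append, List.mem_cons] at this ⊢
      tauto

lemma PathIn.mem_has_succ {a b l} (h : PathIn r a b l) : ∀ z ∈ l, ∃ w, r z w := by
  induction h with
  | refl => simp
  | head hab _ ih =>
    intro z hz
    rcases List.mem_cons.mp hz with rfl | hz'
    · exact ⟨_, hab⟩
    · exact ih z hz'

/-- main path-shortening consequence: a reflexive-transitive chain within a finite set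
can be realized by a path of bounded length -/
lemma rtg_bounded_path {S : Set γ} (hS : S.Finite) (hdom : ∀ p q, r p q → p ∈ S)
    {a b} (h : Relation.ReflTransGen r a b) :
    ∃ l, PathIn r a b l ∧ l.length ≤ S.ncard := by
  classical
  obtain ⟨l, hl⟩ := pathIn_of_rtg h
  obtain ⟨l', hp, hnd, hsub⟩ := PathIn.dedup l.length (le_refl _) hl
  refine ⟨l', hp, ?_⟩
  have hmem : ∀ z ∈ l', z ∈ S := by
    intro z hz
    obtain ⟨w, hw⟩ := hp.mem_has_succ z hz
    exact hdom z w hw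
  have h1 : l'.length = l'.toFinset.card := (List.toFinset_card_of_nodup hnd).symm
  have h2 : l'.toFinset ⊆ hS.toFinset := by
    intro z hz
    rw [Set.Finite.mem_toFinset]
    exact hmem z (List.mem_toFinset.mp hz)
  rw [h1, Set.ncard_eq_toFinset_card S hS]
  exact Finset.card_le_card h2

end Path
end S2P

namespace S2P
universe u
variable {α β : Type}

/-- the derivation-step zip: a grammar derivation together with a run yields the fused structure -/
lemma zipStep {A : Transducer α β} {g : ContextFreeGrammar α}
    {u : List (Symbol α g.NT)} {x : List α} {q q' : QN A} {y : List β}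
    (hder : g.Derives u (x.map Symbol.terminal)) (hrun : NRun A q x y q') :
    ACC A g q u q' x y := by
  induction hder using Relation.ReflTransGen.head_induction_on with
  | refl => exact zipBase x hrun
  | head hprod _ ih =>
    obtain ⟨r, hr, hrw⟩ := hprod
    obtain ⟨p, s', hu, hv⟩ := hrw.exists_parts
    subst hu; subst hv
    rw [List.append_assoc] at ih
    obtain ⟨qm, x₁, x₂, y₁, y₂, hx, hy, hp, hrest⟩ := ACC.split p ih
    obtain ⟨qm₂, x₃, x₄, y₃, y₄, hx₂, hy₂, hmid, hsuf⟩ := ACC.split r.output hrest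
    have hnt : ACC A g qm [Symbol.nonterminal r.input] qm₂ x₃ y₃ := by
      have := ACC.nt hr hmid (ACC.nil (NRun.nil qm₂))
      simpa using this
    have hall := ACC.merge hp (ACC.merge hnt hsuf)
    subst hx hy hx₂ hy₂
    simp only [List.append_assoc] at hall ⊢
    exact hall

variable (A : Transducer α β) (g : ContextFreeGrammar α)

/-- nonterminals that occur as the input of some rule -/
noncomputable def usedNT : Finset g.NT := by
  classical
  exact g.rules.image ContextFreeRule.input

/-- signatures: state, nonterminal, state -/
def Sig : Type := QN A × g.NT × QN A

/-- valid signatures -/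
def SigS : Set (Sig A g) := {σ | σ.2.1 ∈ usedNT g}

lemma SigS_finite : (SigS A g).Finite := by
  letI := QN.fintype A
  have hsub : SigS A g ⊆ (Set.univ : Set (QN A)) ×ˢ
      (((usedNT g : Finset g.NT) : Set g.NT) ×ˢ (Set.univ : Set (QN A))) := by
    rintro ⟨q, B, q'⟩ hσ
    exact ⟨trivial, hσ, trivial⟩
  exact (Set.Finite.prod Set.finite_univ
    (((usedNT g).finite_toSet).prod Set.finite_univ)).subset hsub

/-- the fused structure rooted at a signature (a "tree") -/
def ATT (σ : Sig A g) (x : List α) (y : List β) : Prop :=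
  ∃ r ∈ g.rules, r.input = σ.2.1 ∧ ACC A g σ.1 r.output σ.2.2 x y

/-- height-bounded version -/
def ATb (n : ℕ) (σ : Sig A g) (x : List α) (y : List β) : Prop :=
  ∃ r ∈ g.rules, r.input = σ.2.1 ∧ ACb A g n σ.1 r.output σ.2.2 x y

lemma ATb.att {n σ x y} (h : ATb A g n σ x y) : ATT A g σ x y := by
  obtain ⟨r, hr, hi, hb⟩ := h; exact ⟨r, hr, hi, ⟨n, hb⟩⟩

lemma ATT.atb {σ x y} (h : ATT A g σ x y) : ∃ n, ATb A g n σ x y := by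
  obtain ⟨r, hr, hi, n, hb⟩ := h; exact ⟨n, r, hr, hi, hb⟩

lemma ATT.mem_sigS {σ x y} (h : ATT A g σ x y) : σ ∈ SigS A g := by
  classical
  obtain ⟨r, hr, hi, -⟩ := h
  show σ.2.1 ∈ usedNT g
  rw [← hi]
  unfold usedNT
  convert Finset.mem_image_of_mem ContextFreeRule.input hr

/-- bound on shortest ε-output trees -/
noncomputable def epsB : ℕ :=
  ((SigS_finite A g).toFinset).sup
    (fun σ => sInf {n | ∃ x : List α, x.length = n ∧ ATT A g σ x []})

lemma epsShrink {σ : Sig A g} {x : List α} (h : ATT A g σ x []) :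
    ∃ x', ATT A g σ x' [] ∧ x'.length ≤ epsB A g := by
  set T := {n | ∃ x : List α, x.length = n ∧ ATT A g σ x []} with hT
  have hne : T.Nonempty := ⟨x.length, x, rfl, h⟩
  obtain ⟨x', hx'len, hx'⟩ := Nat.sInf_mem hne
  refine ⟨x', hx', ?_⟩
  rw [hx'len]
  have hσ : σ ∈ (SigS_finite A g).toFinset := by
    rw [Set.Finite.mem_toFinset]; exact ATT.mem_sigS A g h
  exact Finset.le_sup (f := fun σ => sInf {n | ∃ x : List α, x.length = n ∧ ATT A g σ x []}) hσ

/-- max rule output length -/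
def Wg : ℕ := g.rules.sup (fun r => r.output.length)

lemma output_len_le {r : ContextFreeRule α g.NT} (hr : r ∈ g.rules) :
    r.output.length ≤ Wg g :=
  Finset.le_sup (f := fun r => r.output.length) hr

end S2P

namespace S2P
universe u
variable {α β : Type}

/-- Level decomposition: records for each nonterminal child its height, signature, input word
and output word, and the total "emission" (output produced by the runs at this level). -/
inductive Dec (A : Transducer α β) (g : ContextFreeGrammar α) :
    QN A → List (Symbol α g.NT) → QN A → List α → List β →
    List (ℕ × Sig A g × List α × List β) → ℕ → Prop
  | nil {q q' y} : NRun A q [] y q' → Dec A g q [] q' [] y [] y.length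
  | term {q q₁ q' a s x y₁ y₂ cs em} : NRun A q [a] y₁ q₁ → Dec A g q₁ s q' x y₂ cs em →
      Dec A g q (Symbol.terminal a :: s) q' (a :: x) (y₁ ++ y₂) cs (y₁.length + em)
  | nt {m q q₁ q' s u x y₁ y₂ cs em} {r : ContextFreeRule α g.NT} : r ∈ g.rules →
      ACb A g m q r.output q₁ u y₁ → Dec A g q₁ s q' x y₂ cs em →
      Dec A g q (Symbol.nonterminal r.input :: s) q' (u ++ x) (y₁ ++ y₂)
        ((m, (q, r.input, q₁), u, y₁) :: cs) em

variable {A : Transducer α β} {g : ContextFreeGrammar α}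

lemma decOf {n q s q' x y} (h : ACb A g n q s q' x y) :
    ∃ cs em, Dec A g q s q' x y cs em ∧
      ∀ c ∈ cs, c.1 < n ∧ ATb A g c.1 c.2.1 c.2.2.1 c.2.2.2 := by
  induction h with
  | nil hr => exact ⟨[], _, Dec.nil hr, by simp⟩
  | term hr _ ih =>
    obtain ⟨cs, em, hd, hc⟩ := ih
    exact ⟨cs, _, Dec.term hr hd, fun c hc' => ⟨by have := (hc c hc').1; omega, (hc c hc').2⟩⟩
  | @nt m n q q₁ q' s u x y₁ y₂ r hrule hchild hrest ih1 ih2 =>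
    obtain ⟨cs, em, hd, hc⟩ := ih2
    refine ⟨(m, (q, r.input, q₁), u, y₁) :: cs, em, Dec.nt hrule hchild hd, ?_⟩
    rintro c hc'
    rcases List.mem_cons.mp hc' with rfl | hmem
    · exact ⟨by omega, ⟨r, hrule, rfl, hchild⟩⟩
    · exact ⟨by have := (hc c hmem).1; omega, (hc c hmem).2⟩

lemma Dec.sum {q s q' x y cs em} (h : Dec A g q s q' x y cs em) :
    y.length = em + (cs.map (fun c => c.2.2.2.length)).sum := by
  induction h with
  | nil hr => simp
  | term hr _ ih => simp only [List.length_append, List.map, List.sum_cons] at *; omega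
  | nt hrule hchild _ ih => simp only [List.length_append, List.map, List.sum_cons] at *; omega

lemma Dec.flat {q s q' x y cs em} (h : Dec A g q s q' x y cs em) (hem : em = 0) :
    y = (cs.map (fun c => c.2.2.2)).flatten := by
  revert hem
  induction h with
  | nil hr =>
    intro hem
    simp only [List.map_nil, List.flatten_nil]
    exact List.length_eq_zero_iff.mp hem
  | @term q q₁ q' a s x y₁ y₂ cs em hr _ ih =>
    intro hem
    have h1 : y₁ = [] := List.length_eq_zero_iff.mp (by omega)
    have h2 := ih (by omega)
    simp [h1, h2]
  | nt hrule hchild _ ih =>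
    intro hem
    have := ih hem
    simp [this]

lemma Dec.cs_len {q s q' x y cs em} (h : Dec A g q s q' x y cs em) :
    cs.length ≤ s.length := by
  induction h with
  | nil hr => simp
  | term _ _ ih => simp; omega
  | nt _ _ _ ih => simp; omega

lemma countP_le_sum (cs : List (ℕ × Sig A g × List α × List β)) :
    cs.countP (fun c => !c.2.2.2.isEmpty) ≤ (cs.map (fun c => c.2.2.2.length)).sum := by
  induction cs with
  | nil => simp
  | cons c cs ih =>
    rw [List.countP_cons]
    simp only [List.map, List.sum_cons]
    by_cases hc : c.2.2.2 = []
    · have hb : (!c.2.2.2.isEmpty) = false := by simp [hc]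
      rw [hb]
      simp
      omega
    · have h1 : 1 ≤ c.2.2.2.length := List.length_pos_iff.mpr hc
      have h2 : ((if (!c.2.2.2.isEmpty) = true then 1 else 0) : ℕ) ≤ 1 := by split <;> omega
      omega

/-- rebuilding a level with replaced children subtrees (same outputs) -/
lemma Dec.rebuild {q s q' x y cs em} (h : Dec A g q s q' x y cs em) :
    ∀ us' : List (List α), List.Forall₂ (fun c u' => ATT A g c.2.1 u' c.2.2.2) cs us' →
    ∃ x', ACC A g q s q' x' y ∧ x'.length ≤ s.length + (us'.map List.length).sum := by
  induction h with
  | nil hr =>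
    intro us' hf
    cases hf
    exact ⟨[], ACC.nil hr, by simp⟩
  | term hr _ ih =>
    intro us' hf
    obtain ⟨x'', hacc, hlen⟩ := ih us' hf
    refine ⟨_ :: x'', ACC.term hr hacc, ?_⟩
    simp only [List.length_cons] at *
    omega
  | @nt m q q₁ q' s u x y₁ y₂ cs em r hrule hchild hrest ih2 =>
    intro us' hf
    cases hf with
    | cons hhead htail =>
      obtain ⟨r', hr', hi', hacc'⟩ := hhead
      obtain ⟨x'', hacc₂, hlen₂⟩ := ih2 _ htail
      have hb := ACC.nt hr' hacc' hacc₂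
      rw [hi'] at hb
      refine ⟨_, hb, ?_⟩
      simp only [List.length_append, List.length_cons, List.map, List.sum_cons] at *
      omega

/-- choose ε-shrunk replacements for a list of ε-output children -/
lemma epsList (cs : List (ℕ × Sig A g × List α × List β))
    (hw : ∀ c ∈ cs, ATT A g c.2.1 c.2.2.1 c.2.2.2)
    (he : ∀ c ∈ cs, c.2.2.2 = []) :
    ∃ us', List.Forall₂ (fun c u' => ATT A g c.2.1 u' c.2.2.2) cs us' ∧
      (us'.map List.length).sum ≤ epsB A g * cs.length := by
  induction cs with
  | nil => exact ⟨[], List.Forall₂.nil, by simp⟩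
  | cons c cs ih =>
    obtain ⟨us', hf, hsum⟩ := ih (fun c hc => hw c (List.mem_cons_of_mem _ hc))
      (fun c hc => he c (List.mem_cons_of_mem _ hc))
    have hc0 := hw c (List.mem_cons_self)
    rw [he c (List.mem_cons_self)] at hc0
    obtain ⟨u₀, hu₀, hu₀len⟩ := epsShrink A g hc0
    refine ⟨u₀ :: us', List.Forall₂.cons (by rw [he c (List.mem_cons_self)]; exact hu₀) hf, ?_⟩
    simp only [List.map, List.sum_cons, List.length_cons]
    have : epsB A g * (cs.length + 1) = epsB A g * cs.length + epsB A g := by ring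
    omega

end S2P

namespace S2P
universe u
variable {α β : Type} {A : Transducer α β} {g : ContextFreeGrammar α}

/-- the one-hole rebuild for a unary (single productive child, no emission) level -/
lemma Dec.unary {q s q' x y cs em} (h : Dec A g q s q' x y cs em) :
    em = 0 → (∀ c ∈ cs, ATT A g c.2.1 c.2.2.1 c.2.2.2) →
    cs.countP (fun c => !c.2.2.2.isEmpty) = 1 →
    ∃ c₀ ∈ cs, c₀.2.2.2 = y ∧
      ∀ y' u', ATT A g c₀.2.1 u' y' → ∃ x', ACC A g q s q' x' y' ∧
        x'.length ≤ u'.length + s.length * (epsB A g + 1) := by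
  induction h with
  | nil hr =>
    intro _ _ hp
    simp at hp
  | @term q q₁ q' a s x y₁ y₂ cs em hr hrest ih =>
    intro hem hw hp
    have hy₁ : y₁ = [] := List.length_eq_zero_iff.mp (by omega)
    obtain ⟨c₀, hc₀mem, hc₀y, hreb⟩ := ih (by omega) hw hp
    refine ⟨c₀, hc₀mem, by simp [hy₁, hc₀y], ?_⟩
    intro y' u' hfill
    obtain ⟨x'', hacc, hlen⟩ := hreb y' u' hfill
    have hterm := ACC.term (A := A) (g := g) (hy₁ ▸ hr) hacc
    refine ⟨_, by simpa using hterm, ?_⟩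
    simp only [List.length_cons]
    have : (s.length + 1) * (epsB A g + 1) = s.length * (epsB A g + 1) + (epsB A g + 1) := by ring
    omega
  | @nt m q q₁ q' s u x y₁ y₂ cs em r hrule hchild hrest ih =>
    intro hem hw hp
    rw [List.countP_cons] at hp
    by_cases hy₁ : y₁ = []
    · -- head child is an ε-child; the productive child is in the tail
      have hhead : (!(m, (q, r.input, q₁), u, y₁).2.2.2.isEmpty) = false := by simp [hy₁]
      rw [hhead] at hp
      simp only [Bool.false_eq_true, if_false] at hp
      obtain ⟨c₀, hc₀mem, hc₀y, hreb⟩ := ih hem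
        (fun c hc => hw c (List.mem_cons_of_mem _ hc)) (by omega)
      refine ⟨c₀, List.mem_cons_of_mem _ hc₀mem, by simp [hy₁, hc₀y], ?_⟩
      intro y' u' hfill
      obtain ⟨x'', hacc, hlen⟩ := hreb y' u' hfill
      -- shrink the head ε-child
      have hc0 := hw _ (List.mem_cons_self)
      simp only at hc0
      rw [hy₁] at hc0
      obtain ⟨u₀, hu₀, hu₀len⟩ := epsShrink A g hc0
      obtain ⟨r', hr', hi', hacc'⟩ := hu₀
      have hb := ACC.nt hr' hacc' hacc
      rw [hi'] at hb
      refine ⟨_, by simpa using hb, ?_⟩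
      simp only [List.length_append, List.length_cons]
      have : (s.length + 1) * (epsB A g + 1) = s.length * (epsB A g + 1) + (epsB A g + 1) := by
        ring
      omega
    · -- head child is the productive child; the tail is all-ε
      have hhead : (!(m, (q, r.input, q₁), u, y₁).2.2.2.isEmpty) = true := by
        simp [hy₁]
      rw [hhead] at hp
      simp only [if_true] at hp
      have htail0 : cs.countP (fun c => !c.2.2.2.isEmpty) = 0 := by omega
      have htaileps : ∀ c ∈ cs, c.2.2.2 = [] := by
        intro c hc
        have := List.countP_eq_zero.mp htail0 c hc
        simpa using this
      have hy₂ : y₂ = [] := by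
        have hflat := hrest.flat hem
        rw [hflat]
        apply List.flatten_eq_nil_iff.mpr
        intro l hl
        simp only [List.mem_map] at hl
        obtain ⟨c, hc, rfl⟩ := hl
        exact htaileps c hc
      refine ⟨(m, (q, r.input, q₁), u, y₁), List.mem_cons_self, by simp [hy₂], ?_⟩
      intro y' u' hfill
      obtain ⟨r', hr', hi', hacc'⟩ := hfill
      -- rebuild the all-ε tail
      obtain ⟨us', hf, hsum⟩ := epsList cs (fun c hc => hw c (List.mem_cons_of_mem _ hc)) htaileps
      obtain ⟨x'', hacc₂, hlen₂⟩ := hrest.rebuild us' hf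
      rw [hy₂] at hacc₂
      have hb := ACC.nt hr' hacc' hacc₂
      rw [hi'] at hb
      refine ⟨_, by simpa using hb, ?_⟩
      simp only [List.length_append, List.length_cons]
      have hcs := hrest.cs_len
      have h1 : (us'.map List.length).sum ≤ epsB A g * s.length :=
        le_trans hsum (Nat.mul_le_mul_left _ hcs)
      have : (s.length + 1) * (epsB A g + 1) = epsB A g * s.length + s.length + epsB A g + 1 := by
        ring
      omega

end S2P

namespace S2P
universe u
variable {α β : Type} {A : Transducer α β} {g : ContextFreeGrammar α}

/-- the edge relation between signatures: a unary context that can host any subtree -/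
def Edge (A : Transducer α β) (g : ContextFreeGrammar α) (σ τ : Sig A g) : Prop :=
  σ ∈ SigS A g ∧ τ ∈ SigS A g ∧
  ∀ y u, ATT A g τ u y → ∃ x, ATT A g σ x y ∧
    x.length ≤ u.length + Wg g * (epsB A g + 1)

/-- a signature admitting a non-unary level decomposition for output `y` -/
def GoodN (A : Transducer α β) (g : ContextFreeGrammar α) (τ : Sig A g) (y : List β) : Prop :=
  ∃ r ∈ g.rules, r.input = τ.2.1 ∧ ∃ x cs em,
    Dec A g τ.1 r.output τ.2.2 x y cs em ∧
    (∀ c ∈ cs, ATT A g c.2.1 c.2.2.1 c.2.2.2) ∧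
    ¬(em = 0 ∧ cs.countP (fun c => !c.2.2.2.isEmpty) = 1)

lemma spineAux : ∀ (n : ℕ) {σ : Sig A g} {x y}, ATb A g n σ x y →
    ∃ τ, Relation.ReflTransGen (Edge A g) σ τ ∧ GoodN A g τ y := by
  intro n
  induction n using Nat.strong_induction_on with
  | _ n ih =>
    intro σ x y hatb
    obtain ⟨r, hr, hi, hb⟩ := hatb
    obtain ⟨cs, em, hd, hc⟩ := decOf hb
    by_cases hun : em = 0 ∧ cs.countP (fun c => !c.2.2.2.isEmpty) = 1
    · -- unary level: make an edge and recurse into the unique productive child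
      obtain ⟨c₀, hc₀mem, hc₀y, hreb⟩ := hd.unary hun.1
        (fun c hcm => ((hc c hcm).2).att A g) hun.2
      have hedge : Edge A g σ c₀.2.1 := by
        refine ⟨(ATb.att A g ⟨r, hr, hi, hb⟩).mem_sigS A g,
          (((hc c₀ hc₀mem).2).att A g).mem_sigS A g, ?_⟩
        intro y' u' hfill
        obtain ⟨x', hacc, hlen⟩ := hreb y' u' hfill
        refine ⟨x', ⟨r, hr, hi, hacc⟩, ?_⟩
        have := Nat.mul_le_mul_right (epsB A g + 1) (output_len_le g hr)
        omega
      obtain ⟨hlt, hcatb⟩ := hc c₀ hc₀mem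
      rw [hc₀y] at hcatb
      obtain ⟨τ, hpath, hgood⟩ := ih c₀.1 hlt hcatb
      exact ⟨τ, Relation.ReflTransGen.head hedge hpath, hgood⟩
    · exact ⟨σ, Relation.ReflTransGen.refl,
        r, hr, hi, x, cs, em, hd, fun c hcm => ((hc c hcm).2).att A g, hun⟩

/-- composing edges along a path -/
lemma path_fold : ∀ {l : List (Sig A g)} {σ τ}, PathIn (Edge A g) σ τ l → ∀ {u y},
    ATT A g τ u y → ∃ x, ATT A g σ x y ∧
      x.length ≤ u.length + l.length * (Wg g * (epsB A g + 1)) := by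
  intro l σ τ hp
  induction hp with
  | refl a => intro u y h; exact ⟨u, h, by simp⟩
  | head hedge _ ih =>
    intro u y h
    obtain ⟨x₁, h1, hl1⟩ := ih h
    obtain ⟨x₀, h0, hl0⟩ := hedge.2.2 _ _ h1
    refine ⟨x₀, h0, ?_⟩
    simp only [List.length_cons]
    have : (List.length ‹List (Sig A g)› + 1) * (Wg g * (epsB A g + 1)) =
        List.length ‹List (Sig A g)› * (Wg g * (epsB A g + 1)) + Wg g * (epsB A g + 1) := by ring
    omega

/-- the master constant -/
noncomputable def Kc (A : Transducer α β) (g : ContextFreeGrammar α) : ℕ :=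
  Wg g + epsB A g * Wg g + (SigS A g).ncard * (Wg g * (epsB A g + 1)) + epsB A g + 1

/-- simultaneous choice of shrunk children -/
lemma buildChildren (cs : List (ℕ × Sig A g × List α × List β))
    (hch : ∀ c ∈ cs, ∃ u', ATT A g c.2.1 u' c.2.2.2 ∧
      (c.2.2.2 = [] → u'.length ≤ epsB A g) ∧
      (c.2.2.2 ≠ [] → u'.length + Kc A g ≤ 2 * Kc A g * c.2.2.2.length)) :
    ∃ us', List.Forall₂ (fun c u' => ATT A g c.2.1 u' c.2.2.2) cs us' ∧
      (us'.map List.length).sum + Kc A g * (cs.countP (fun c => !c.2.2.2.isEmpty)) ≤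
        2 * Kc A g * (cs.map (fun c => c.2.2.2.length)).sum + epsB A g * cs.length := by
  induction cs with
  | nil => exact ⟨[], List.Forall₂.nil, by simp⟩
  | cons c cs ih =>
    obtain ⟨us', hf, hsum⟩ := ih (fun c hc => hch c (List.mem_cons_of_mem _ hc))
    obtain ⟨u', hu', heps, hprod⟩ := hch c (List.mem_cons_self)
    refine ⟨u' :: us', List.Forall₂.cons hu' hf, ?_⟩
    rw [List.countP_cons]
    simp only [List.map, List.sum_cons, List.length_cons]
    have hring1 : epsB A g * (cs.length + 1) = epsB A g * cs.length + epsB A g := by ring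
    have hring2 : 2 * Kc A g * (c.2.2.2.length + (cs.map (fun c => c.2.2.2.length)).sum) =
        2 * Kc A g * c.2.2.2.length + 2 * Kc A g * (cs.map (fun c => c.2.2.2.length)).sum := by
      ring
    by_cases hc : c.2.2.2 = []
    · have hb : (!c.2.2.2.isEmpty) = false := by simp [hc]
      rw [hb]
      simp only [Bool.false_eq_true, if_false, hc, List.length_nil, Nat.add_zero, Nat.zero_add]
      have := heps hc
      omega
    · have hb : (!c.2.2.2.isEmpty) = true := by simp [hc]
      rw [hb]
      simp only [if_true]
      have := hprod hc
      have hmul : Kc A g * (cs.countP (fun c => !c.2.2.2.isEmpty) + 1) =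
          Kc A g * cs.countP (fun c => !c.2.2.2.isEmpty) + Kc A g := by ring
      omega

end S2P

namespace S2P
universe u
variable {α β : Type} {A : Transducer α β} {g : ContextFreeGrammar α}

lemma child_lt {q s q' x y cs em} (hd : Dec A g q s q' x y cs em)
    (hnotu : ¬(em = 0 ∧ cs.countP (fun c => !c.2.2.2.isEmpty) = 1))
    {c} (hc : c ∈ cs) (hprod : c.2.2.2 ≠ []) : c.2.2.2.length < y.length := by
  obtain ⟨l₁, l₂, rfl⟩ := List.append_of_mem hc
  have hsum := hd.sum
  rw [List.map_append, List.sum_append, List.map_cons, List.sum_cons] at hsum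
  have hcnt : (l₁ ++ c :: l₂).countP (fun c => !c.2.2.2.isEmpty) =
      l₁.countP (fun c => !c.2.2.2.isEmpty) + (c :: l₂).countP (fun c => !c.2.2.2.isEmpty) :=
    List.countP_append ..
  rw [List.countP_cons] at hcnt
  have hcb : (!c.2.2.2.isEmpty) = true := by simp [hprod]
  rw [hcb] at hcnt
  simp only [if_true] at hcnt
  have hylen : 1 ≤ c.2.2.2.length := List.length_pos_iff.mpr hprod
  by_cases hem : em = 0
  · -- then the productive count is ≥ 2, so some other child is productive
    have hne1 : (l₁ ++ c :: l₂).countP (fun c => !c.2.2.2.isEmpty) ≠ 1 :=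
      fun h => hnotu ⟨hem, h⟩
    have h2 : 1 ≤ l₁.countP (fun c => !c.2.2.2.isEmpty) + l₂.countP (fun c => !c.2.2.2.isEmpty) := by
      omega
    have hs1 := countP_le_sum l₁
    have hs2 := countP_le_sum l₂
    omega
  · omega

lemma main_shrink : ∀ (N : ℕ) (y : List β), y.length ≤ N → 1 ≤ y.length →
    ∀ (σ : Sig A g) (x : List α), ATT A g σ x y →
    ∃ x', ATT A g σ x' y ∧ x'.length + Kc A g ≤ 2 * Kc A g * y.length := by
  intro N
  induction N using Nat.strong_induction_on with
  | _ N ih =>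
    intro y hyN hy1 σ x hatt
    obtain ⟨n, hatb⟩ := hatt.atb A g
    obtain ⟨τ, hrtg, hgood⟩ := spineAux n hatb
    obtain ⟨r, hr, hi, x₀, cs, em, hdec, hcw, hnotu⟩ := hgood
    have hch : ∀ c ∈ cs, ∃ u', ATT A g c.2.1 u' c.2.2.2 ∧
        (c.2.2.2 = [] → u'.length ≤ epsB A g) ∧
        (c.2.2.2 ≠ [] → u'.length + Kc A g ≤ 2 * Kc A g * c.2.2.2.length) := by
      intro c hc
      by_cases hnil : c.2.2.2 = []
      · have h0 := hcw c hc
        rw [hnil] at h0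
        obtain ⟨u', hu', hl⟩ := epsShrink A g h0
        exact ⟨u', by rw [hnil]; exact hu', fun _ => hl, fun h => absurd hnil h⟩
      · have hlt := child_lt hdec hnotu hc hnil
        have hlt' : c.2.2.2.length < N := by omega
        obtain ⟨u', hu', hl⟩ := ih c.2.2.2.length hlt' c.2.2.2 (le_refl _)
          (List.length_pos_iff.mpr hnil) c.2.1 c.2.2.1 (hcw c hc)
        exact ⟨u', hu', fun h => absurd h hnil, fun _ => hl⟩
    obtain ⟨us', hf, hsum2⟩ := buildChildren cs hch
    obtain ⟨xτ, haccτ, hlenτ⟩ := hdec.rebuild us' hf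
    have hattτ : ATT A g τ xτ y := ⟨r, hr, hi, haccτ⟩
    obtain ⟨l, hpath, hlen⟩ := rtg_bounded_path (SigS_finite A g) (fun p q hpq => hpq.1) hrtg
    obtain ⟨xf, hattf, hlenf⟩ := path_fold hpath hattτ
    refine ⟨xf, hattf, ?_⟩
    have hW : r.output.length ≤ Wg g := output_len_le g hr
    have hcsW : cs.length ≤ Wg g := le_trans hdec.cs_len hW
    have hEcs : epsB A g * cs.length ≤ epsB A g * Wg g := Nat.mul_le_mul_left _ hcsW
    have hlJ : l.length * (Wg g * (epsB A g + 1)) ≤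
        (SigS A g).ncard * (Wg g * (epsB A g + 1)) := Nat.mul_le_mul_right _ hlen
    have hysum := hdec.sum
    have h2KN : 2 * Kc A g * y.length =
        2 * Kc A g * em + 2 * Kc A g * (cs.map (fun c => c.2.2.2.length)).sum := by
      rw [hysum]; ring
    have hKdef : Kc A g = Wg g + epsB A g * Wg g +
        (SigS A g).ncard * (Wg g * (epsB A g + 1)) + epsB A g + 1 := rfl
    by_cases hem : em = 0
    · have hp1 : cs.countP (fun c => !c.2.2.2.isEmpty) ≠ 1 := fun h => hnotu ⟨hem, h⟩
      by_cases hp0 : cs.countP (fun c => !c.2.2.2.isEmpty) = 0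
      · -- no productive children and no emission: y would be empty
        exfalso
        have hz : (cs.map (fun c => c.2.2.2.length)).sum = 0 := by
          apply List.sum_eq_zero
          intro z hz
          simp only [List.mem_map] at hz
          obtain ⟨c, hcmem, rfl⟩ := hz
          have := List.countP_eq_zero.mp hp0 c hcmem
          have hnil : c.2.2.2 = [] := by simpa using this
          simp [hnil]
        omega
      · have hp2 : 2 ≤ cs.countP (fun c => !c.2.2.2.isEmpty) := by omega
        have hKp : Kc A g * 2 ≤ Kc A g * cs.countP (fun c => !c.2.2.2.isEmpty) :=
          Nat.mul_le_mul_left _ hp2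
        omega
    · have hKem : 2 * Kc A g ≤ 2 * Kc A g * em :=
        Nat.le_mul_of_pos_right _ (by omega)
      omega

end S2P

namespace S2P
universe u
variable {α β : Type} {A : Transducer α β} {g : ContextFreeGrammar α}

lemma ACC.single_nt {B : g.NT} {q q' x y} (h : ACC A g q [Symbol.nonterminal B] q' x y) :
    ∃ q₁ u y₁ y₂, ATT A g (q, B, q₁) u y₁ ∧ NRun A q₁ [] y₂ q' ∧ x = u ∧ y = y₁ ++ y₂ := by
  obtain ⟨n, hb⟩ := h
  cases hb with
  | nt hrule hchild hrest =>
    cases hrest with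
    | nil hr2 => exact ⟨_, _, _, _, ⟨_, hrule, rfl, ⟨_, hchild⟩⟩, hr2, by simp, rfl⟩

lemma ATT.toACC {q : QN A} {B : g.NT} {q₁ q' u y₁ y₂} (h : ATT A g (q, B, q₁) u y₁)
    (h2 : NRun A q₁ [] y₂ q') :
    ACC A g q [Symbol.nonterminal B] q' u (y₁ ++ y₂) := by
  obtain ⟨r', hr', hi', hacc'⟩ := h
  have hb := ACC.nt hr' hacc' (ACC.nil h2)
  rw [hi'] at hb
  simpa using hb

/-- The universal shrink: any tree admits a linearly bounded replacement. -/
lemma shrink_any {σ : Sig A g} {x y} (h : ATT A g σ x y) :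
    ∃ x', ATT A g σ x' y ∧ x'.length ≤ 2 * Kc A g * y.length + epsB A g := by
  by_cases hy : 1 ≤ y.length
  · obtain ⟨x', h', hl⟩ := main_shrink y.length y (le_refl _) hy σ x h
    exact ⟨x', h', by omega⟩
  · have hynil : y = [] := by
      cases y with
      | nil => rfl
      | cons a l => simp at hy
    subst hynil
    obtain ⟨x', h', hl⟩ := epsShrink A g h
    exact ⟨x', h', by omega⟩

/-- **Key witness lemma**: every value of a rational function on a context-free language
has a witness of linearly bounded length. -/
theorem key_core (t : List α → Option (List β))
    (A : Transducer α β) (hA : ∀ x y, t x = some y ↔ (x, y) ∈ A.T)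
    (g : ContextFreeGrammar α) (X : Set (List α)) (hg : g.language = X) :
    ∃ C : ℕ, 0 < C ∧ ∀ y x, x ∈ X → t x = some y →
      ∃ x', x' ∈ X ∧ t x' = some y ∧ x'.length ≤ C * (y.length + 1) := by
  refine ⟨2 * Kc A g + epsB A g + 1, by omega, ?_⟩
  intro y x hxX hxy
  rw [t_iff_nrun t hA] at hxy
  obtain ⟨qi, qf, y', hI, hF, hrun, hy⟩ := hxy
  have hxX' : x ∈ g.language := by rw [hg]; exact hxX
  have hder : g.Derives [Symbol.nonterminal g.initial] (x.map Symbol.terminal) :=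
    (g.mem_language_iff x).mp hxX'
  have hacc : ACC A g (Sum.inl qi) [Symbol.nonterminal g.initial] (Sum.inl qf) x y' :=
    zipStep hder hrun
  obtain ⟨q₁, u, y₁, y₂, hattu, hrun₂, hxu, hy'⟩ := ACC.single_nt hacc
  obtain ⟨u', hatt', hul⟩ := shrink_any hattu
  have hacc' : ACC A g (Sum.inl qi) [Symbol.nonterminal g.initial] (Sum.inl qf) u' (y₁ ++ y₂) :=
    ATT.toACC hatt' hrun₂
  have hsound := ACC.sound hacc'
  refine ⟨u', ?_, ?_, ?_⟩
  · rw [← hg]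
    exact (g.mem_language_iff u').mpr hsound.1
  · rw [t_iff_nrun t hA]
    exact ⟨qi, qf, y₁ ++ y₂, hI, hF, hsound.2, by rw [hy, hy']⟩
  · -- length bound
    have hylen : y₁.length ≤ y.length := by
      rw [hy, hy']
      simp only [List.length_append]
      omega
    have hmul : 2 * Kc A g * y₁.length ≤ 2 * Kc A g * y.length :=
      Nat.mul_le_mul_left _ hylen
    have hexp : (2 * Kc A g + epsB A g + 1) * (y.length + 1) =
        2 * Kc A g * y.length + epsB A g * y.length + y.length +
          2 * Kc A g + epsB A g + 1 := by ring
    omega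

end S2P


/-- The core combinatorial lemma: every value of a rational function on a context-free
language has a witness of linearly bounded length. -/
lemma key_witness {α β : Type} [Fintype α] [Fintype β]
    (t : List α → Option (List β)) (hrat : IsRationalFun t)
    (X : Set (List α)) (hcf : Language.IsContextFree (X : Language α)) :
    ∃ C : ℕ, 0 < C ∧ ∀ y x, x ∈ X → t x = some y →
      ∃ x', x' ∈ X ∧ t x' = some y ∧ x'.length ≤ C * (y.length + 1) := by
  obtain ⟨A, hA⟩ := hrat
  obtain ⟨g, hg⟩ := hcf
  exact S2P.key_core t A hA g X hg

lemma cev_head {α Y : Type} (t : List α → Y) (x : List α) (hx : x ≠ []) :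
    (cev t x).head? = some (t x) := by
  cases x with
  | nil => exact absurd rfl hx
  | cons a l =>
    have h1 : (a :: l).tails = (a :: l) :: l.tails := List.tails_cons a l
    have h2 : l.tails ≠ [] := by
      cases l <;> simp [List.tails]
    unfold cev
    rw [h1, List.dropLast_cons_of_ne_nil h2]
    simp

lemma setOf_len_le_finite {α : Type} [Fintype α] (X : Set (List α)) (n : ℕ) :
    {x | x ∈ X ∧ x.length ≤ n}.Finite :=
  (List.finite_length_le α n).subset (fun _ hx => hx.2)

lemma growthOf_target_finite {α Y : Type} [Fintype α] (t : List α → Y)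
    (X : Set (List α)) (n : ℕ) : (t '' {x | x ∈ X ∧ x.length ≤ n}).Finite :=
  (setOf_len_le_finite X n).image t

lemma langGrowth_le_growthOf {α β : Type} [Fintype α] [Fintype β] (t : List α → Option (List β))
    (X : Set (List α)) (C : ℕ)
    (hkey : ∀ y x, x ∈ X → t x = some y →
      ∃ x', x' ∈ X ∧ t x' = some y ∧ x'.length ≤ C * (y.length + 1))
    (n : ℕ) : langGrowth (optImage t X) n ≤ growthOf t X (C * (n + 1)) := by
  refine Set.ncard_le_ncard_of_injOn (fun y => some y) ?_ ?_ (growthOf_target_finite t X _)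
  · rintro y ⟨⟨x, hxX, hxy⟩, hylen⟩
    obtain ⟨x', hx'X, hx'y, hx'len⟩ := hkey y x hxX hxy
    have hmul : C * (y.length + 1) ≤ C * (n + 1) := Nat.mul_le_mul_left _ (by omega)
    exact ⟨x', ⟨hx'X, hx'len.trans hmul⟩, hx'y⟩
  · intro y₁ _ y₂ _ h
    simpa using h

lemma langGrowth_le_growthOf_cev {α β : Type} [Fintype α] [Fintype β] (t : List α → Option (List β))
    (X : Set (List α)) (C : ℕ)
    (hkey : ∀ y x, x ∈ X → t x = some y →
      ∃ x', x' ∈ X ∧ t x' = some y ∧ x'.length ≤ C * (y.length + 1))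
    (n : ℕ) : langGrowth (optImage t X) n ≤ growthOf (cev t) X (C * (n + 1)) + 1 := by
  classical
  set S := {y | y ∈ optImage t X ∧ y.length ≤ n} with hS
  -- choose a short witness for each y in S
  have hw : ∀ y ∈ S, ∃ x', x' ∈ X ∧ t x' = some y ∧ x'.length ≤ C * (n + 1) := by
    rintro y ⟨⟨x, hxX, hxy⟩, hylen⟩
    obtain ⟨x', hx'X, hx'y, hx'len⟩ := hkey y x hxX hxy
    exact ⟨x', hx'X, hx'y, hx'len.trans (by nlinarith)⟩
  choose! w hwX hwt hwlen using hw
  set S' := {y ∈ S | w y ≠ []} with hS'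
  have hsub : (S \ S').Subsingleton := by
    rintro y₁ hy₁ y₂ hy₂
    have h1 : w y₁ = [] := by
      by_contra h; exact hy₁.2 ⟨hy₁.1, h⟩
    have h2 : w y₂ = [] := by
      by_contra h; exact hy₂.2 ⟨hy₂.1, h⟩
    have e1 := hwt y₁ hy₁.1
    have e2 := hwt y₂ hy₂.1
    rw [h1] at e1; rw [h2] at e2
    rw [e1] at e2
    exact Option.some_injective _ e2
  have hSfin : S.Finite := (List.finite_length_le β n).subset (fun _ hx => hx.2)
  have step1 : S.ncard ≤ (S \ (S \ S')).ncard + (S \ S').ncard :=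
    Set.ncard_le_ncard_diff_add_ncard S (S \ S') (hSfin.subset Set.diff_subset)
  have hdiff : S \ (S \ S') ⊆ S' := by
    rintro y ⟨hyS, hy⟩
    by_contra h
    exact hy ⟨hyS, h⟩
  have step2 : (S \ (S \ S')).ncard ≤ S'.ncard :=
    Set.ncard_le_ncard hdiff (hSfin.subset (fun y hy => hy.1))
  have step3 : (S \ S').ncard ≤ 1 := (Set.ncard_le_one
    (hSfin.subset Set.diff_subset)).mpr (fun a ha b hb => hsub ha hb)
  have step4 : S'.ncard ≤ growthOf (cev t) X (C * (n + 1)) := by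
    refine Set.ncard_le_ncard_of_injOn (fun y => cev t (w y)) ?_ ?_
      (growthOf_target_finite (cev t) X _)
    · rintro y ⟨hyS, _⟩
      exact ⟨w y, ⟨hwX y hyS, hwlen y hyS⟩, rfl⟩
    · rintro y₁ ⟨hy₁, hne₁⟩ y₂ ⟨hy₂, hne₂⟩ h
      have h' : cev t (w y₁) = cev t (w y₂) := h
      have h1 := cev_head t (w y₁) hne₁
      have h2 := cev_head t (w y₂) hne₂
      rw [h'] at h1
      rw [h1] at h2
      have h3 := h2
      rw [hwt y₁ hy₁, hwt y₂ hy₂] at h3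
      exact Option.some_injective _ (Option.some_injective _ h3.symm).symm
  calc langGrowth (optImage t X) n = S.ncard := rfl
    _ ≤ (S \ (S \ S')).ncard + (S \ S').ncard := step1
    _ ≤ S'.ncard + 1 := by omega
    _ ≤ growthOf (cev t) X (C * (n + 1)) + 1 := by omega

lemma transfer_exponential (h : ℕ → ℕ) (c : ℝ) (hc : 1 < c) (C : ℕ) (hC : 0 < C)
    (H : ∀ m : ℕ, ∃ n : ℕ, m ≤ n ∧ c ^ n ≤ (h (C * (n + 1)) : ℝ) + 1) :
    GrowsExponentially h := by
  have hc0 : (0 : ℝ) < c := lt_trans zero_lt_one hc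
  obtain ⟨k, hk⟩ := pow_unbounded_of_one_lt (4 : ℝ) hc
  refine ⟨c ^ ((1 : ℝ) / (2 * C)), ?_, ?_⟩
  · rw [Real.one_lt_rpow_iff_of_pos hc0]
    left
    constructor
    · exact hc
    · positivity
  · intro M
    obtain ⟨n, hn, hle⟩ := H (max M (2 * k + 1))
    have hnM : M ≤ n := le_trans (le_max_left _ _) hn
    have hnk : 2 * k + 1 ≤ n := le_trans (le_max_right _ _) hn
    refine ⟨C * (n + 1), ?_, ?_⟩
    · calc M ≤ n := hnM
        _ ≤ C * (n + 1) := by nlinarith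
    · -- (c ^ (1/(2C))) ^ (C(n+1)) = c ^ ((n+1)/2)
      have hrw : (c ^ ((1 : ℝ) / (2 * C))) ^ (C * (n + 1)) = c ^ (((n : ℝ) + 1) / 2) := by
        rw [← Real.rpow_natCast (c ^ ((1 : ℝ) / (2 * C))) (C * (n + 1)),
          ← Real.rpow_mul (le_of_lt hc0)]
        congr 1
        have hCne : (C : ℝ) ≠ 0 := Nat.cast_ne_zero.mpr hC.ne'
        push_cast
        field_simp
      rw [hrw]
      -- c ^ ((n+1)/2) ≤ c ^ n - 1 ≤ h (C (n+1))
      have hA1 : (1 : ℝ) ≤ c ^ (((n : ℝ) + 1) / 2) := by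
        apply Real.one_le_rpow hc.le
        positivity
      have hB : (2 : ℝ) ≤ c ^ (((n : ℝ) - 1) / 2) := by
        have h4 : (4 : ℝ) ≤ c ^ (k : ℝ) := by
          rw [Real.rpow_natCast]; exact hk.le
        have hmono : c ^ (k : ℝ) ≤ c ^ (((n : ℝ) - 1) / 2) := by
          apply Real.rpow_le_rpow_left_iff hc |>.mpr
          have : (2 * k + 1 : ℝ) ≤ (n : ℝ) := by exact_mod_cast hnk
          linarith
        linarith
      have hsplit : c ^ ((n : ℕ) : ℝ) = c ^ (((n : ℝ) + 1) / 2) * c ^ (((n : ℝ) - 1) / 2) := by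
        rw [← Real.rpow_add hc0]
        congr 1
        ring
      have hcn : c ^ (((n : ℝ) + 1) / 2) + 1 ≤ c ^ n := by
        have : c ^ ((n : ℕ) : ℝ) = c ^ n := Real.rpow_natCast c n
        nlinarith [this, hsplit, hA1, hB]
      linarith [hle]

end Aux

/-- if `t` is rational with suffix-closed domain, `X ⊆ dom t` is
context-free and `t(X)` has exponential growth, then the `t`-growth and the
`⟨t⟩`-growth of `X` are exponential. -/
theorem statement2 {α β : Type} [Fintype α] [Fintype β]
    (t : List α → Option (List β)) (hrat : IsRationalFun t)
    (hsc : SuffixClosed (pdom t))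
    (X : Set (List α)) (hX : X ⊆ pdom t)
    (hcf : Language.IsContextFree (X : Language α))
    (hexp : GrowsExponentially (langGrowth (optImage t X))) :
    GrowsExponentially (growthOf t X) ∧ GrowsExponentially (growthOf (cev t) X) := by
  obtain ⟨c, hc, hio⟩ := hexp
  obtain ⟨C, hC, hkey⟩ := key_witness t hrat X hcf
  constructor
  · apply transfer_exponential _ c hc C hC
    intro m
    obtain ⟨n, hn, hcn⟩ := hio m
    refine ⟨n, hn, hcn.trans ?_⟩
    have := langGrowth_le_growthOf t X C hkey n
    have h2 : (langGrowth (optImage t X) n : ℝ) ≤ (growthOf t X (C * (n + 1)) : ℝ) :=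
      Nat.cast_le.mpr this
    linarith
  · apply transfer_exponential _ c hc C hC
    intro m
    obtain ⟨n, hn, hcn⟩ := hio m
    refine ⟨n, hn, hcn.trans ?_⟩
    have := langGrowth_le_growthOf_cev t X C hkey n
    have h2 : (langGrowth (optImage t X) n : ℝ) ≤ (growthOf (cev t) X (C * (n + 1)) : ℝ) + 1 := by
      exact_mod_cast Nat.cast_le.mpr this
    linarith
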